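/- Let μ < 0 be a root of L_n^{(1)}(-2μ) = 0, set f(x) = x e^{μx} L_n^{(1)}(-2μx), and let u_0 ∈ W_0^{1,2}((0,1)) ∩ W^{2,2}((0,1)). Then -(1/μ) ∫_0^1 u_0'(x) (d/dx)(x L_n^{(1)}(-2μx) e^{μx}) dx = ∫_0^1 x e^{μx} L_n^{(1)}(-2μx) (μ u_0(x) + 2(n+1)u_0(x)/x) dx. -/

import Mathlib

open MeasureTheory Set Polynomial

/-- The associated Laguerre polynomial L_n^{(β)}(z) = Σ_{k=0}^n (-1)^k C(n+β, n-k) z^k / k!. -/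
noncomputable def laguerre (β n : ℕ) (z : ℂ) : ℂ :=
  ∑ k ∈ Finset.range (n + 1),
    (-1 : ℂ) ^ k * ((n + β).choose (n - k) : ℂ) * z ^ k / (Nat.factorial k : ℂ)

noncomputable def lagPoly (n : ℕ) : Polynomial ℂ :=
  ∑ k ∈ Finset.range (n + 1),
    Polynomial.C ((-1 : ℂ) ^ k * ((n + 1).choose (n - k) : ℂ) / (Nat.factorial k : ℂ)) * Polynomial.X ^ k

lemma lagPoly_eval (n : ℕ) (z : ℂ) : (lagPoly n).eval z = laguerre 1 n z := by
  simp only [lagPoly, laguerre, Polynomial.eval_finset_sum, Polynomial.eval_mul,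
    Polynomial.eval_C, Polynomial.eval_pow, Polynomial.eval_X]
  exact Finset.sum_congr rfl fun k _ => by ring

lemma lagPoly_coeff (n k : ℕ) :
    (lagPoly n).coeff k =
      if k ≤ n then (-1 : ℂ) ^ k * ((n + 1).choose (n - k) : ℂ) / (Nat.factorial k : ℂ) else 0 := by
  simp only [lagPoly, Polynomial.finset_sum_coeff, Polynomial.coeff_C_mul, Polynomial.coeff_X_pow,
    mul_ite, mul_one, mul_zero]
  rw [Finset.sum_ite_eq (Finset.range (n+1)) k]
  simp [Nat.lt_succ_iff]

lemma lag_rec (n k : ℕ) :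
    ((k:ℂ)+1) * ((k:ℂ)+2) * (lagPoly n).coeff (k+1) + ((n:ℂ) - (k:ℂ)) * (lagPoly n).coeff k = 0 := by
  rw [lagPoly_coeff, lagPoly_coeff]
  rcases lt_trichotomy k n with h | h | h
  · have hk1 : k + 1 ≤ n := h
    have hk : k ≤ n := le_of_lt h
    rw [if_pos hk1, if_pos hk]
    have hnat : (n+1).choose (n - k) * (n - k) = (n+1).choose (n - k - 1) * (k + 2) := by
      have := Nat.choose_succ_right_eq (n+1) (n - k - 1)
      have h1 : n - k - 1 + 1 = n - k := by omega
      have h2 : n + 1 - (n - k - 1) = k + 2 := by omega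
      rw [h1, h2] at this
      exact this
    have hsub : (n - (k+1)) = n - k - 1 := by omega
    have hcast : ((n:ℂ) - (k:ℂ)) = ((n - k : ℕ) : ℂ) := by
      push_cast [Nat.cast_sub hk]; ring
    rw [hsub, hcast]
    have hfac : (Nat.factorial (k+1) : ℂ) = (k+1) * (Nat.factorial k : ℂ) := by
      push_cast [Nat.factorial_succ]; ring
    rw [hfac]
    have hfk : (Nat.factorial k : ℂ) ≠ 0 := Nat.cast_ne_zero.mpr (Nat.factorial_ne_zero k)
    have hk1' : ((k:ℂ) + 1) ≠ 0 := Nat.cast_add_one_ne_zero k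
    field_simp
    have hnatC : ((n+1).choose (n - k) : ℂ) * ((n-k : ℕ) : ℂ) = ((n+1).choose (n - k - 1) : ℂ) * ((k:ℂ) + 2) := by
      exact_mod_cast congrArg (Nat.cast : ℕ → ℂ) hnat
    linear_combination (-1:ℂ)^k * hnatC
  · subst h
    rw [if_neg (by omega), if_pos le_rfl]
    simp
  · rw [if_neg (by omega), if_neg (by omega)]
    simp

lemma lagPoly_ode_poly (n : ℕ) :
    X * derivative (derivative (lagPoly n)) + Polynomial.C (2:ℂ) * derivative (lagPoly n)
      - X * derivative (lagPoly n) + Polynomial.C (n:ℂ) * lagPoly n = 0 := by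
  ext k
  simp only [coeff_add, coeff_sub, coeff_C_mul, coeff_zero]
  rcases k with _ | k
  · simp only [Polynomial.mul_coeff_zero, coeff_X_zero, zero_mul, coeff_derivative]
    have := lag_rec n 0
    push_cast at this ⊢
    linear_combination this
  · rw [coeff_X_mul, coeff_X_mul]
    simp only [coeff_derivative]
    have := lag_rec n (k+1)
    push_cast at this ⊢
    linear_combination this

lemma lagPoly_ode (n : ℕ) (z : ℂ) :
    z * ((derivative (derivative (lagPoly n))).eval z)
      + (2 - z) * ((derivative (lagPoly n)).eval z) + (n:ℂ) * (lagPoly n).eval z = 0 := by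
  have h := congrArg (Polynomial.eval z) (lagPoly_ode_poly n)
  simp only [eval_add, eval_sub, eval_mul, eval_X, eval_C, eval_zero] at h
  linear_combination h
noncomputable def gFun (n : ℕ) (c : ℂ) (x : ℝ) : ℂ :=
  (x:ℂ) * (lagPoly n).eval (-2*c*x) * Complex.exp (c*x)

noncomputable def g1Fun (n : ℕ) (c : ℂ) (x : ℝ) : ℂ :=
  Complex.exp (c*x) * ((lagPoly n).eval (-2*c*x)
    + (x:ℂ) * (-2*c) * (derivative (lagPoly n)).eval (-2*c*x)
    + c * (x:ℂ) * (lagPoly n).eval (-2*c*x))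

noncomputable def g2Fun (n : ℕ) (c : ℂ) (x : ℝ) : ℂ :=
  c^2 * gFun n c x + 2*c*((n:ℂ)+1) * Complex.exp (c*x) * (lagPoly n).eval (-2*c*x)

lemma hasDerivAt_ofReal (x : ℝ) : HasDerivAt (fun y : ℝ => (y:ℂ)) 1 x := by
  simpa using (hasDerivAt_id x).ofReal_comp

lemma hasDerivAt_evalComp (p : Polynomial ℂ) (c : ℂ) (x : ℝ) :
    HasDerivAt (fun y : ℝ => p.eval (-2*c*y)) ((derivative p).eval (-2*c*x) * (-2*c)) x := by
  have hlin : HasDerivAt (fun y : ℝ => -2*c*(y:ℂ)) (-2*c) x := by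
    simpa using (hasDerivAt_ofReal x).const_mul (-2*c)
  have := (p.hasDerivAt (-2*c*x)).comp x hlin
  exact this

lemma hasDerivAt_cexp (c : ℂ) (x : ℝ) :
    HasDerivAt (fun y : ℝ => Complex.exp (c*y)) (c * Complex.exp (c*x)) x := by
  have : HasDerivAt (fun y : ℝ => c*(y:ℂ)) c x := by
    simpa using (hasDerivAt_ofReal x).const_mul c
  simpa [mul_comm] using this.cexp

lemma hasDerivAt_gFun (n : ℕ) (c : ℂ) (x : ℝ) :
    HasDerivAt (gFun n c) (g1Fun n c x) x := by
  have h := (((hasDerivAt_ofReal x).mul (hasDerivAt_evalComp (lagPoly n) c x)).mul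
    (hasDerivAt_cexp c x))
  refine h.congr_deriv ?_
  simp only [g1Fun, gFun, Pi.mul_apply]
  ring

lemma hasDerivAt_g1Fun (n : ℕ) (c : ℂ) (x : ℝ) :
    HasDerivAt (g1Fun n c) (g2Fun n c x) x := by
  have hA := ((hasDerivAt_evalComp (lagPoly n) c x).add
      (((hasDerivAt_ofReal x).mul_const (-2*c)).mul
        (hasDerivAt_evalComp (derivative (lagPoly n)) c x))).add
    (((hasDerivAt_ofReal x).const_mul c).mul (hasDerivAt_evalComp (lagPoly n) c x))
  have h := (hasDerivAt_cexp c x).mul hA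
  refine h.congr_deriv ?_
  symm
  simp only [g2Fun, gFun, Pi.mul_apply, Pi.add_apply]
  linear_combination (2*c*Complex.exp (c*(x:ℂ))) * lagPoly_ode n (-2*c*(x:ℝ))

lemma continuous_g1Fun (n : ℕ) (c : ℂ) : Continuous (g1Fun n c) :=
  continuous_iff_continuousAt.mpr fun x => (hasDerivAt_g1Fun n c x).continuousAt

lemma continuous_g2Fun (n : ℕ) (c : ℂ) : Continuous (g2Fun n c) := by
  have hg : Continuous (gFun n c) :=
    continuous_iff_continuousAt.mpr fun x => (hasDerivAt_gFun n c x).continuousAt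
  have h1 : Continuous fun x : ℝ => Complex.exp (c*x) :=
    Complex.continuous_exp.comp (by continuity)
  have h2 : Continuous fun x : ℝ => (lagPoly n).eval (-2*c*x) :=
    (lagPoly n).continuous.comp (by continuity)
  exact ((continuous_const.mul hg).add ((continuous_const.mul h1).mul h2))

/-- Integration-by-parts identity (Lemma 3.3 of the paper): for μ < 0 a root of
L_n^{(1)}(-2μ) = 0 and u₀ ∈ W_0^{1,2}((0,1)) ∩ W^{2,2}((0,1)),
-(1/μ) ∫ u₀'(x) (d/dx)(x L_n^{(1)}(-2μx) e^{μx}) dx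
  = ∫ x e^{μx} L_n^{(1)}(-2μx) (μ u₀(x) + 2(n+1)u₀(x)/x) dx. -/
theorem laguerre_ibp_identity
    (n : ℕ) (μ : ℝ) (hμ : μ < 0)
    (hroot : laguerre 1 n (-2 * μ) = 0)
    (u₀ u₀' u₀'' : ℝ → ℂ)
    (hcont : ContinuousOn u₀ (Icc 0 1))
    (hcont' : ContinuousOn u₀' (Icc 0 1))
    (hderiv : ∀ x ∈ Ioo (0:ℝ) 1, HasDerivAt u₀ (u₀' x) x)
    (hderiv' : ∀ x ∈ Ioo (0:ℝ) 1, HasDerivAt u₀' (u₀'' x) x)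
    (hu0 : u₀ 0 = 0) (hu1 : u₀ 1 = 0)
    (hL2 : IntegrableOn (fun x => ‖u₀ x‖^2) (Ioo 0 1))
    (hL2' : IntegrableOn (fun x => ‖u₀' x‖^2) (Ioo 0 1))
    (hL2'' : IntegrableOn (fun x => ‖u₀'' x‖^2) (Ioo 0 1)) :
    -(1 / (μ : ℂ)) *
        ∫ x in Ioo (0:ℝ) 1,
          u₀' x *
            deriv (fun y : ℝ =>
              (y : ℂ) * laguerre 1 n (-2 * μ * y) * Complex.exp (μ * y)) x
      = ∫ x in Ioo (0:ℝ) 1,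
          (x : ℂ) * Complex.exp (μ * x) * laguerre 1 n (-2 * μ * x) *
            ((μ : ℂ) * u₀ x + 2 * (n + 1) * u₀ x / (x : ℂ)) := by
  set c : ℂ := (μ : ℂ) with hc_def
  have hc : c ≠ 0 := by
    simp only [hc_def, ne_eq, Complex.ofReal_eq_zero]
    exact ne_of_lt hμ
  -- identify the function in the statement with gFun
  have hfun : (fun y : ℝ => (y : ℂ) * laguerre 1 n (-2 * μ * y) * Complex.exp (μ * y))
      = gFun n c := by
    funext y
    simp only [gFun, ← lagPoly_eval, hc_def]
  have hderiv_eq : ∀ x : ℝ,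
      deriv (fun y : ℝ => (y : ℂ) * laguerre 1 n (-2 * μ * y) * Complex.exp (μ * y)) x
        = g1Fun n c x := by
    intro x
    rw [hfun]
    exact (hasDerivAt_gFun n c x).deriv
  -- FTC for u₀ * g1Fun
  have hcontg1 : Continuous (g1Fun n c) := continuous_g1Fun n c
  have hcontg2 : Continuous (g2Fun n c) := continuous_g2Fun n c
  have hFcont : ContinuousOn (fun x => u₀ x * g1Fun n c x) (Icc 0 1) :=
    hcont.mul hcontg1.continuousOn
  have hFderiv : ∀ x ∈ Ioo (0:ℝ) 1,
      HasDerivAt (fun x => u₀ x * g1Fun n c x)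
        (u₀' x * g1Fun n c x + u₀ x * g2Fun n c x) x := by
    intro x hx
    exact (hderiv x hx).mul (hasDerivAt_g1Fun n c x)
  have hi1 : IntervalIntegrable (fun x => u₀' x * g1Fun n c x) volume 0 1 := by
    apply ContinuousOn.intervalIntegrable
    rw [uIcc_of_le (by norm_num : (0:ℝ) ≤ 1)]
    exact hcont'.mul hcontg1.continuousOn
  have hi2 : IntervalIntegrable (fun x => u₀ x * g2Fun n c x) volume 0 1 := by
    apply ContinuousOn.intervalIntegrable
    rw [uIcc_of_le (by norm_num : (0:ℝ) ≤ 1)]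
    exact hcont.mul hcontg2.continuousOn
  have hFTC : (∫ x in (0:ℝ)..1, (u₀' x * g1Fun n c x + u₀ x * g2Fun n c x))
      = u₀ 1 * g1Fun n c 1 - u₀ 0 * g1Fun n c 0 := by
    exact intervalIntegral.integral_eq_sub_of_hasDerivAt_of_le (by norm_num)
      hFcont hFderiv (hi1.add hi2)
  rw [hu0, hu1, zero_mul, zero_mul, sub_zero] at hFTC
  rw [intervalIntegral.integral_add hi1 hi2] at hFTC
  -- convert interval integrals to Ioo integrals
  have hIoo1 : (∫ x in (0:ℝ)..1, u₀' x * g1Fun n c x) = ∫ x in Ioo (0:ℝ) 1, u₀' x * g1Fun n c x := by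
    rw [intervalIntegral.integral_of_le (by norm_num : (0:ℝ) ≤ 1),
      MeasureTheory.integral_Ioc_eq_integral_Ioo]
  have hIoo2 : (∫ x in (0:ℝ)..1, u₀ x * g2Fun n c x) = ∫ x in Ioo (0:ℝ) 1, u₀ x * g2Fun n c x := by
    rw [intervalIntegral.integral_of_le (by norm_num : (0:ℝ) ≤ 1),
      MeasureTheory.integral_Ioc_eq_integral_Ioo]
  rw [hIoo1, hIoo2] at hFTC
  -- rewrite LHS integrand
  have hL : (∫ x in Ioo (0:ℝ) 1,
      u₀' x * deriv (fun y : ℝ => (y : ℂ) * laguerre 1 n (-2 * μ * y) * Complex.exp (μ * y)) x)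
      = ∫ x in Ioo (0:ℝ) 1, u₀' x * g1Fun n c x := by
    congr 1
    funext x
    rw [hderiv_eq x]
  -- rewrite RHS integrand
  have hR : (∫ x in Ioo (0:ℝ) 1,
        (x : ℂ) * Complex.exp (μ * x) * laguerre 1 n (-2 * μ * x) *
          ((μ : ℂ) * u₀ x + 2 * (n + 1) * u₀ x / (x : ℂ)))
      = ∫ x in Ioo (0:ℝ) 1, (1/c) * (u₀ x * g2Fun n c x) := by
    apply MeasureTheory.setIntegral_congr_fun measurableSet_Ioo
    intro x hx
    have hx0 : (x:ℂ) ≠ 0 := by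
      simp only [ne_eq, Complex.ofReal_eq_zero]
      exact ne_of_gt hx.1
    simp only [g2Fun, gFun, ← lagPoly_eval]
    rw [hc_def]
    push_cast
    have hμ0 : (μ:ℂ) ≠ 0 := hc
    field_simp
  rw [hL, hR]
  rw [MeasureTheory.integral_const_mul]
  rw [eq_neg_of_add_eq_zero_left hFTC]
  ring
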